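/- Let X, X₁, X₂, … be i.i.d. random variables on a measurable space Ω and φ : Ω → ℝ^D measurable with E[‖φ(X)‖] < ∞ and φ₁ ≡ 1. Then almost surely there exists a positive integer n such that E[φ(X)] ∈ conv{φ(X₁), …, φ(X_n)}. -/

import Mathlib

open MeasureTheory Filter

section Aux

lemma euclid_abs_le_norm {D : ℕ} (u : EuclideanSpace ℝ (Fin D)) (i : Fin D) :
    |u i| ≤ ‖u‖ := by
  rw [EuclideanSpace.norm_eq, ← Real.sqrt_sq_eq_abs]
  apply Real.sqrt_le_sqrt
  have h : (u i) ^ 2 = ‖u i‖ ^ 2 := by rw [Real.norm_eq_abs, sq_abs]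
  rw [h]
  exact Finset.single_le_sum (fun j _ => sq_nonneg ‖u j‖) (Finset.mem_univ i)

lemma dot_abs_le {D : ℕ} (u : EuclideanSpace ℝ (Fin D)) (y : Fin D → ℝ) :
    |∑ i, u i * y i| ≤ D * (‖u‖ * ‖y‖) := by
  calc |∑ i, u i * y i| ≤ ∑ i, |u i * y i| := Finset.abs_sum_le_sum_abs _ _
    _ ≤ ∑ _i : Fin D, ‖u‖ * ‖y‖ := by
        refine Finset.sum_le_sum (fun i _ => ?_)
        rw [abs_mul]
        refine mul_le_mul (euclid_abs_le_norm u i) ?_ (abs_nonneg _) (norm_nonneg _)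
        have := norm_le_pi_norm y i
        rwa [Real.norm_eq_abs] at this
    _ = D * (‖u‖ * ‖y‖) := by simp [Finset.sum_const, Finset.card_univ, nsmul_eq_mul]

lemma dot_eq_zero_of_mem_span {D : ℕ} {s : Set (EuclideanSpace ℝ (Fin D))} {z : Fin D → ℝ}
    (h : ∀ t ∈ s, ∑ i, t i * z i = 0) {w : EuclideanSpace ℝ (Fin D)}
    (hw : w ∈ Submodule.span ℝ s) :
    ∑ i, w i * z i = 0 := by
  induction hw using Submodule.span_induction with
  | mem x hx => exact h x hx
  | zero => simp
  | add x y hx hy ihx ihy =>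
      have : ∀ i, (x + y) i = x i + y i := fun i => rfl
      simp only [this, add_mul, Finset.sum_add_distrib, ihx, ihy, add_zero]
  | smul a x hx ih =>
      have : ∀ i, (a • x) i = a * x i := fun i => rfl
      simp only [this, mul_assoc, ← Finset.mul_sum, ih, mul_zero]

/-- Second Borel–Cantelli specialization: i.i.d. samples a.s. hit any set of positive
measure. -/
lemma exists_hit {Ω' Ω : Type*} [MeasurableSpace Ω'] [MeasurableSpace Ω]
    (P : Measure Ω') [IsProbabilityMeasure P] (μ : Measure Ω)
    (X : ℕ → Ω' → Ω) (hXm : ∀ k, Measurable (X k))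
    (hindep : ProbabilityTheory.iIndepFun (m := fun _ => ‹MeasurableSpace Ω›) X P)
    (hlaw : ∀ k, P.map (X k) = μ)
    {A : Set Ω} (hA : MeasurableSet A) (hpos : μ A ≠ 0) :
    ∀ᵐ ω' ∂P, ∃ k, X k ω' ∈ A := by
  have hmeas : ∀ k, P (X k ⁻¹' A) = μ A := fun k => by
    rw [← hlaw k, Measure.map_apply (hXm k) hA]
  have hiset : ProbabilityTheory.iIndepSet (fun k => X k ⁻¹' A) P := by
    rw [ProbabilityTheory.iIndepSet_iff_meas_biInter (fun k => (hXm k) hA)]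
    intro s
    exact hindep.measure_inter_preimage_eq_mul s (sets := fun _ => A) (fun i _ => hA)
  have htsum : (∑' _ : ℕ, P (X 0 ⁻¹' A)) = ⊤ :=
    ENNReal.tsum_const_eq_top_of_ne_zero (by rw [hmeas 0]; exact hpos)
  have h1 : P (limsup (fun k => X k ⁻¹' A) atTop) = 1 := by
    refine ProbabilityTheory.measure_limsup_eq_one (fun k => (hXm k) hA) hiset ?_
    calc (∑' k : ℕ, P (X k ⁻¹' A)) = ∑' _ : ℕ, P (X 0 ⁻¹' A) := by
          congr 1; funext k; rw [hmeas k, hmeas 0]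
      _ = ⊤ := htsum
  have hms : MeasurableSet (limsup (fun k => X k ⁻¹' A) atTop) :=
    MeasurableSet.measurableSet_limsup (fun k => (hXm k) hA)
  have hc : P (limsup (fun k => X k ⁻¹' A) atTop)ᶜ = 0 := by
    rw [measure_compl hms (measure_ne_top _ _), h1, measure_univ, tsub_self]
  have : ∀ᵐ ω' ∂P, ω' ∈ limsup (fun k => X k ⁻¹' A) atTop := by
    rw [ae_iff]
    convert hc using 2
    rfl
  filter_upwards [this] with ω' hω'
  exact (Filter.mem_limsup_iff_frequently_mem.mp hω').exists

end Aux

/-- **Monte Carlo cubature construction.**  If `X, X₁, X₂, …` are i.i.d. samples with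
common law `μ` and `φ : Ω → ℝ^D` is integrable with first coordinate `≡ 1`, then almost
surely some finite initial segment of the samples has `E[φ(X)]` in the convex hull of
its `φ`-images. -/
theorem monte_carlo_cubature {Ω' Ω : Type*} [MeasurableSpace Ω'] [MeasurableSpace Ω]
    (P : Measure Ω') [IsProbabilityMeasure P] (μ : Measure Ω) [IsProbabilityMeasure μ]
    (X : ℕ → Ω' → Ω) (hXm : ∀ k, Measurable (X k))
    (hindep : ProbabilityTheory.iIndepFun (m := fun _ => ‹MeasurableSpace Ω›) X P)
    (hlaw : ∀ k, P.map (X k) = μ)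
    (D : ℕ) (hD : 0 < D) (φ : Ω → Fin D → ℝ) (hφ : Measurable φ)
    (hint : Integrable φ μ) (hone : ∀ ω, φ ω ⟨0, hD⟩ = 1) :
    ∀ᵐ ω' ∂P, ∃ n : ℕ, 0 < n ∧
      (fun i => ∫ ω, φ ω i ∂μ) ∈
        convexHull ℝ {y : Fin D → ℝ | ∃ k < n, y = φ (X k ω')} := by
  classical
  set m : Fin D → ℝ := fun i => ∫ ω, φ ω i ∂μ with hm
  -- coordinatewise integrability and measurability
  have hint_i : ∀ i, Integrable (fun ω => φ ω i) μ := fun i =>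
    (ContinuousLinearMap.proj (R := ℝ) (φ := fun _ : Fin D => ℝ) i).integrable_comp hint
  have hφ_i : ∀ i, Measurable (fun ω => φ ω i) := fun i => (measurable_pi_apply i).comp hφ
  have hdot_int : ∀ u : EuclideanSpace ℝ (Fin D), Integrable (fun ω => ∑ i, u i * φ ω i) μ :=
    fun u => integrable_finset_sum _ (fun i _ => (hint_i i).const_mul _)
  have hdot_meas : ∀ u : EuclideanSpace ℝ (Fin D), Measurable (fun ω => ∑ i, u i * φ ω i) :=
    fun u => Finset.measurable_sum _ (fun i _ => (hφ_i i).const_mul _)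
  have hdot_avg : ∀ u : EuclideanSpace ℝ (Fin D),
      ∫ ω, (∑ i, u i * φ ω i) ∂μ = ∑ i, u i * m i := fun u => by
    rw [integral_finset_sum _ (fun i _ => (hint_i i).const_mul _)]
    exact Finset.sum_congr rfl fun i _ => integral_const_mul _ _
  -- the submodule of degenerate directions
  let N : Submodule ℝ (EuclideanSpace ℝ (Fin D)) :=
    { carrier := {u | ∀ᵐ ω ∂μ, ∑ i, u i * φ ω i = ∑ i, u i * m i}
      add_mem' := by
        intro a b ha hb
        simp only [Set.mem_setOf_eq] at ha hb ⊢
        filter_upwards [ha, hb] with ω ha' hb'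
        have hc : ∀ i, (a + b) i = a i + b i := fun i => rfl
        simp only [hc, add_mul, Finset.sum_add_distrib, ha', hb']
      zero_mem' := by
        simp only [Set.mem_setOf_eq]
        refine Filter.Eventually.of_forall (fun ω => ?_)
        simp
      smul_mem' := by
        intro c a ha
        simp only [Set.mem_setOf_eq] at ha ⊢
        filter_upwards [ha] with ω ha'
        have hc : ∀ i, (c • a) i = c * a i := fun i => rfl
        simp only [hc, mul_assoc, ← Finset.mul_sum, ha'] }
  have hNmem : ∀ u : EuclideanSpace ℝ (Fin D),
      μ {ω | ∑ i, u i * φ ω i < ∑ i, u i * m i} = 0 → u ∈ N := by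
    intro u h0
    have hge : ∀ᵐ ω ∂μ, ∑ i, u i * m i ≤ ∑ i, u i * φ ω i := by
      rw [ae_iff]
      convert h0 using 2
      ext ω
      simp [not_le]
    have hnn : 0 ≤ᵐ[μ] fun ω => (∑ i, u i * φ ω i) - ∑ i, u i * m i :=
      hge.mono fun ω h => by simp only [Pi.zero_apply]; linarith
    have hi : Integrable (fun ω => (∑ i, u i * φ ω i) - ∑ i, u i * m i) μ :=
      (hdot_int u).sub (integrable_const _)
    have hz : ∫ ω, ((∑ i, u i * φ ω i) - ∑ i, u i * m i) ∂μ = 0 := by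
      rw [integral_sub (hdot_int u) (integrable_const _), hdot_avg, integral_const]
      simp
    have heq := (integral_eq_zero_iff_of_nonneg_ae hnn hi).mp hz
    have : ∀ᵐ ω ∂μ, ∑ i, u i * φ ω i = ∑ i, u i * m i := by
      filter_upwards [heq] with ω h
      have : (∑ i, u i * φ ω i) - ∑ i, u i * m i = 0 := h
      linarith
    exact this
  -- a finite generating set for N
  obtain ⟨T, hT⟩ : N.FG := IsNoetherian.noetherian N
  -- the a.e. (in μ) orthogonality statement for generators
  have hae_T : ∀ᵐ ω ∂μ, ∀ t ∈ T, ∑ i, t i * φ ω i = ∑ i, t i * m i := by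
    have hsub : ∀ᵐ ω ∂μ, ∀ x : {t // t ∈ T},
        ∑ i, (x : EuclideanSpace ℝ (Fin D)) i * φ ω i =
          ∑ i, (x : EuclideanSpace ℝ (Fin D)) i * m i := by
      rw [ae_all_iff]
      rintro ⟨tt, htt⟩
      have htN : tt ∈ N := by
        rw [← hT]; exact Submodule.subset_span htt
      exact htN
    filter_upwards [hsub] with ω h tt htt
    exact h ⟨tt, htt⟩
  have hT_set_meas : MeasurableSet {ω | ∀ t ∈ T, ∑ i, t i * φ ω i = ∑ i, t i * m i} := by
    have : {ω | ∀ t ∈ T, ∑ i, t i * φ ω i = ∑ i, t i * m i} =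
        ⋂ t ∈ T, {ω | ∑ i, t i * φ ω i = ∑ i, t i * m i} := by
      ext ω; simp
    rw [this]
    refine MeasurableSet.biInter T.countable_toSet (fun t _ => ?_)
    exact measurableSet_eq_fun (hdot_meas t) (measurable_const : Measurable (fun _ : Ω => ∑ i, t i * m i))
  -- caps around each unit vector in Nᗮ
  let S : Set (EuclideanSpace ℝ (Fin D)) := Metric.sphere 0 1 ∩ (Nᗮ : Set (EuclideanSpace ℝ (Fin D)))
  have hcap : ∀ x : {u : EuclideanSpace ℝ (Fin D) // u ∈ S}, ∃ δ : ℝ, 0 < δ ∧ ∃ A : Set Ω,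
      MeasurableSet A ∧ μ A ≠ 0 ∧
      ∀ u' : EuclideanSpace ℝ (Fin D), ‖u' - x.1‖ < δ →
        ∀ ω ∈ A, ∑ i, u' i * (φ ω i - m i) < 0 := by
    rintro ⟨u, hu_sph, hu_orth⟩
    have hu_norm : ‖u‖ = 1 := by
      have := hu_sph
      rwa [Metric.mem_sphere, dist_zero_right] at this
    have hu_ne : u ≠ 0 := by
      intro h; rw [h, norm_zero] at hu_norm; norm_num at hu_norm
    -- positive probability of the strict negative half-space
    have hpos : μ {ω | ∑ i, u i * φ ω i < ∑ i, u i * m i} ≠ 0 := by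
      intro h0
      have huN : u ∈ N := hNmem u h0
      have : u ∈ N ⊓ Nᗮ := ⟨huN, hu_orth⟩
      rw [Submodule.inf_orthogonal_eq_bot] at this
      exact hu_ne (Submodule.mem_bot ℝ |>.mp this)
    -- truncated caps
    set B : ℕ → Set Ω := fun j =>
      {ω | ∑ i, u i * φ ω i ≤ (∑ i, u i * m i) - 1 / (j + 1) ∧
        ‖(fun i => φ ω i - m i : Fin D → ℝ)‖ ≤ j + 1} with hB
    have hB_meas : ∀ j, MeasurableSet (B j) := by
      intro j
      refine MeasurableSet.inter ?_ ?_
      · exact measurableSet_le (hdot_meas u)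
          (measurable_const : Measurable (fun _ : Ω => (∑ i, u i * m i) - 1 / (j + 1)))
      · refine measurableSet_le ?_
          (measurable_const : Measurable (fun _ : Ω => (j : ℝ) + 1))
        refine Measurable.norm ?_
        exact measurable_pi_lambda _ (fun i => (hφ_i i).sub measurable_const)
    have hsub : {ω | ∑ i, u i * φ ω i < ∑ i, u i * m i} ⊆ ⋃ j, B j := by
      intro ω hω
      have hω' : ∑ i, u i * φ ω i < ∑ i, u i * m i := hω
      obtain ⟨j₁, hj₁⟩ := exists_nat_one_div_lt (sub_pos.mpr hω')
      obtain ⟨j₂, hj₂⟩ := exists_nat_ge ‖(fun i => φ ω i - m i : Fin D → ℝ)‖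
      refine Set.mem_iUnion.mpr ⟨max j₁ j₂, ?_, ?_⟩
      · have h1 : (1 : ℝ) / (max j₁ j₂ + 1) ≤ 1 / (j₁ + 1) := by
          apply one_div_le_one_div_of_le
          · positivity
          · have : (j₁ : ℝ) ≤ max j₁ j₂ := by exact_mod_cast le_max_left j₁ j₂
            linarith
        have := le_of_lt hj₁
        linarith
      · have : (j₂ : ℝ) ≤ max j₁ j₂ := by exact_mod_cast le_max_right j₁ j₂
        linarith
    obtain ⟨j, hj⟩ : ∃ j, μ (B j) ≠ 0 := by
      by_contra h
      push_neg at h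
      have : μ (⋃ j, B j) = 0 := measure_iUnion_null h
      exact hpos (measure_mono_null hsub this)
    -- the cap radius
    set a : ℝ := 1 / (j + 1) with ha
    set b : ℝ := D * (j + 1) with hb
    have hapos : 0 < a := by positivity
    have hbnn : 0 ≤ b := by positivity
    refine ⟨a / (2 * (b + 1)), by positivity, B j, hB_meas j, hj, ?_⟩
    intro u' hu' ω hω
    obtain ⟨hω1, hω2⟩ := hω
    have hdotu : ∑ i, u i * (φ ω i - m i) ≤ -a := by
      have : ∑ i, u i * (φ ω i - m i) = (∑ i, u i * φ ω i) - ∑ i, u i * m i := by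
        simp [mul_sub, Finset.sum_sub_distrib]
      rw [this]; linarith
    have hdiff : |∑ i, (u' - u) i * (φ ω i - m i)| ≤ a * b / (2 * (b + 1)) := by
      calc |∑ i, (u' - u) i * (φ ω i - m i)|
          ≤ D * (‖u' - u‖ * ‖(fun i => φ ω i - m i : Fin D → ℝ)‖) :=
            dot_abs_le (u' - u) _
        _ ≤ D * ((a / (2 * (b + 1))) * (j + 1)) := by
            refine mul_le_mul_of_nonneg_left ?_ (by positivity)
            refine mul_le_mul (le_of_lt hu') hω2 (norm_nonneg _) (by positivity)
        _ = a * b / (2 * (b + 1)) := by rw [hb]; ring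
    have hsplit : ∑ i, u' i * (φ ω i - m i) =
        (∑ i, u i * (φ ω i - m i)) + ∑ i, (u' - u) i * (φ ω i - m i) := by
      have hc : ∀ i, (u' - u) i = u' i - u i := fun i => rfl
      simp only [hc, sub_mul, Finset.sum_sub_distrib]
      ring
    have hfrac : a * b / (2 * (b + 1)) < a := by
      rw [div_lt_iff₀ (by positivity)]
      nlinarith
    have habs := (abs_le.mp hdiff).2
    rw [hsplit]
    linarith
  choose δ hδ A hAm hA0 hAprop using hcap
  -- compactness: finitely many caps cover S
  have hScomp : IsCompact S :=
    (isCompact_sphere (0 : EuclideanSpace ℝ (Fin D)) 1).inter_right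
      (Submodule.closed_of_finiteDimensional Nᗮ)
  have hcover : S ⊆ ⋃ x : {u // u ∈ S}, Metric.ball x.1 (δ x) := by
    intro u hu
    exact Set.mem_iUnion.mpr ⟨⟨u, hu⟩, Metric.mem_ball_self (hδ ⟨u, hu⟩)⟩
  obtain ⟨t, ht⟩ := hScomp.elim_finite_subcover _ (fun x => Metric.isOpen_ball) hcover
  -- the almost sure events
  have hhit : ∀ᵐ ω' ∂P, ∀ x ∈ t, ∃ k, X k ω' ∈ A x := by
    have hsub : ∀ᵐ ω' ∂P, ∀ x : {x // x ∈ t}, ∃ k, X k ω' ∈ A x.1 := by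
      rw [ae_all_iff]
      rintro ⟨x, hx⟩
      exact exists_hit P μ X hXm hindep hlaw (hAm x) (hA0 x)
    filter_upwards [hsub] with ω' h x hx
    exact h ⟨x, hx⟩
  have horth : ∀ᵐ ω' ∂P, ∀ k : ℕ, ∀ tt ∈ T, ∑ i, tt i * φ (X k ω') i = ∑ i, tt i * m i := by
    rw [ae_all_iff]
    intro k
    have h := hae_T
    rw [← hlaw k] at h
    exact (ae_map_iff (hXm k).aemeasurable hT_set_meas).mp h
  filter_upwards [hhit, horth] with ω' h1 h2
  -- choose hit times and the horizon n
  choose! K hK using h1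
  set n : ℕ := t.sup K + 1 with hn
  refine ⟨n, Nat.succ_pos _, ?_⟩
  by_contra hnot
  -- set of sample values
  set s : Set (Fin D → ℝ) := {y : Fin D → ℝ | ∃ k < n, y = φ (X k ω')} with hs
  have hsfin : s.Finite := by
    have : s = (fun k => φ (X k ω')) '' {k | k < n} := by
      ext y; simp [hs, eq_comm]
    rw [this]
    exact (Set.finite_Iio n).image _
  have hsclosed : IsClosed (convexHull ℝ s) := (hsfin.isCompact_convexHull ℝ).isClosed
  obtain ⟨f, c, hfm, hfs⟩ :=
    geometric_hahn_banach_point_closed (convex_convexHull ℝ s) hsclosed hnot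
  -- the representing vector of f
  set u₀ : EuclideanSpace ℝ (Fin D) :=
    WithLp.toLp 2 (fun i => f (fun j => if i = j then (1:ℝ) else 0) : Fin D → ℝ) with hu₀
  have hfrep : ∀ y : Fin D → ℝ, f y = ∑ i, u₀ i * y i := by
    intro y
    have := (f.toLinearMap).pi_apply_eq_sum_univ y
    simp only [ContinuousLinearMap.coe_coe] at this
    rw [this]
    exact Finset.sum_congr rfl fun i _ => by
      rw [smul_eq_mul, mul_comm]
  -- orthogonal decomposition of u₀
  set w : EuclideanSpace ℝ (Fin D) := (N.orthogonalProjectionOnto u₀ : EuclideanSpace ℝ (Fin D))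
    with hw
  set v : EuclideanSpace ℝ (Fin D) := u₀ - w with hv
  have hwN : w ∈ N := (N.orthogonalProjectionOnto u₀).2
  have hvO : v ∈ Nᗮ := Submodule.sub_starProjection_mem_orthogonal (K := N) u₀
  -- samples pair to zero against N
  have hzero : ∀ k : ℕ, ∀ w' ∈ N, ∑ i, w' i * (φ (X k ω') i - m i) = 0 := by
    intro k w' hw'
    rw [← hT] at hw'
    refine dot_eq_zero_of_mem_span ?_ hw'
    intro tt htt
    have := h2 k tt htt
    simp [mul_sub, Finset.sum_sub_distrib, this]
  have hkey : ∀ k : ℕ, ∑ i, u₀ i * (φ (X k ω') i - m i) =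
      ∑ i, v i * (φ (X k ω') i - m i) := by
    intro k
    have hc : ∀ i, u₀ i = v i + w i := fun i => by
      show u₀ i = (u₀ - w) i + w i
      show u₀ i = (u₀ i - w i) + w i
      ring
    calc ∑ i, u₀ i * (φ (X k ω') i - m i)
        = ∑ i, (v i + w i) * (φ (X k ω') i - m i) := by
          exact Finset.sum_congr rfl fun i _ => by rw [← hc i]
      _ = (∑ i, v i * (φ (X k ω') i - m i)) + ∑ i, w i * (φ (X k ω') i - m i) := by
          simp [add_mul, Finset.sum_add_distrib]
      _ = ∑ i, v i * (φ (X k ω') i - m i) := by rw [hzero k w hwN, add_zero]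
  -- f(sample) - f(m) in terms of the dot products
  have hfsub : ∀ k : ℕ, f (φ (X k ω')) - f m = ∑ i, u₀ i * (φ (X k ω') i - m i) := by
    intro k
    rw [hfrep, hfrep]
    simp [mul_sub, Finset.sum_sub_distrib]
  -- every sample (with k < n) is strictly separated
  have hsep : ∀ k, k < n → c < f (φ (X k ω')) :=
    fun k hk => hfs _ (subset_convexHull ℝ s ⟨k, hk, rfl⟩)
  by_cases hv0 : v = 0
  · -- degenerate case: f is constant on samples, contradiction with k = 0
    have h0 : f (φ (X 0 ω')) - f m = 0 := by
      rw [hfsub 0, hkey 0, hv0]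
      simp
    have := hsep 0 (Nat.succ_pos _)
    have : f (φ (X 0 ω')) = f m := by linarith
    linarith [hsep 0 (Nat.succ_pos _), hfm, this]
  · -- main case: the normalized v lies in a cap
    set vh : EuclideanSpace ℝ (Fin D) := ‖v‖⁻¹ • v with hvh
    have hvnorm : 0 < ‖v‖ := norm_pos_iff.mpr hv0
    have hvh_sph : vh ∈ Metric.sphere (0 : EuclideanSpace ℝ (Fin D)) 1 := by
      rw [Metric.mem_sphere, dist_zero_right, hvh, norm_smul, norm_inv, norm_norm]
      field_simp
    have hvh_orth : vh ∈ Nᗮ := Submodule.smul_mem _ _ hvO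
    have hvhS : vh ∈ S := ⟨hvh_sph, hvh_orth⟩
    obtain ⟨x, hxt, hxball⟩ : ∃ x ∈ t, vh ∈ Metric.ball x.1 (δ x) := by
      have := ht hvhS
      simpa using this
    have hkx : K x < n := Nat.lt_succ_of_le (Finset.le_sup hxt)
    have hhitx : X (K x) ω' ∈ A x := hK x hxt
    have hneg : ∑ i, vh i * (φ (X (K x) ω') i - m i) < 0 := by
      refine hAprop x vh ?_ _ hhitx
      rwa [Metric.mem_ball, dist_eq_norm] at hxball
    have hvneg : ∑ i, v i * (φ (X (K x) ω') i - m i) < 0 := by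
      have hc : ∀ i, vh i = ‖v‖⁻¹ * v i := fun i => rfl
      have : ∑ i, vh i * (φ (X (K x) ω') i - m i) =
          ‖v‖⁻¹ * ∑ i, v i * (φ (X (K x) ω') i - m i) := by
        simp only [hc, mul_assoc, ← Finset.mul_sum]
      rw [this] at hneg
      have hinv : 0 < ‖v‖⁻¹ := inv_pos.mpr hvnorm
      by_contra hcon
      push_neg at hcon
      exact absurd hneg (not_lt.mpr (mul_nonneg hinv.le hcon))
    have : f (φ (X (K x) ω')) - f m < 0 := by
      rw [hfsub, hkey]
      exact hvneg
    linarith [hsep (K x) hkx, hfm]
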